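/- Let n ≥ 1, let · be a quasigroup operation of order n on Fin n, and let σ and τ be disjoint complete mappings of (Fin n, ·). Let ∗ be the Bruck–Belousov prolongation of (Fin n, ·) along σ, a quasigroup operation on Fin (n+1) with last element e. Define τ' : Fin (n+1) → Fin (n+1) by τ'x = τx for x < n and τ'e = e. Then τ' is a complete mapping of (Fin (n+1), ∗); that is, τ' is a permutation of Fin (n+1) and the map x ↦ x∗τ'x is a bijection of Fin (n+1). -/
import Mathlib


/-- A binary operation on `Fin m` is a quasigroup operation if all left and
right translations are bijections. -/
def IsQuasigroup {m : ℕ} (f : Fin m → Fin m → Fin m) : Prop :=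
  ∀ a : Fin m, Function.Bijective (fun x => f a x) ∧ Function.Bijective (fun x => f x a)

/-- Let `f` be a quasigroup operation of order `n ≥ 1` on `Fin n` with disjoint
complete mappings `σ` and `τ`, and let `star` be the Bruck–Belousov prolongation
of `f` along `σ` (characterized cell-by-cell by `h1`–`h5`, with `Fin n`
identified with the first `n` elements of `Fin (n+1)` and `e = Fin.last n`).
Extend `τ` to `τ' : Fin (n+1) → Fin (n+1)` by `τ' x = τ x` for `x < n` and
`τ' e = e`.  Then `τ'` is a complete mapping of `(Fin (n+1), star)`: `τ'` is a
permutation of `Fin (n+1)` and `x ↦ star x (τ' x)` is a bijection. -/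

lemma extend_bijective {n : ℕ} (g : Fin n → Fin n) (hg : Function.Injective g)
    (F : Fin (n + 1) → Fin (n + 1))
    (hF1 : ∀ x : Fin n, F x.castSucc = (g x).castSucc)
    (hF2 : F (Fin.last n) = Fin.last n) : Function.Bijective F := by
  rw [← Finite.injective_iff_bijective]
  intro a b hab
  induction a using Fin.lastCases with
  | last =>
    induction b using Fin.lastCases with
    | last => rfl
    | cast b =>
      rw [hF2, hF1] at hab
      exact absurd hab.symm (Fin.castSucc_lt_last (g b)).ne
  | cast a =>
    induction b using Fin.lastCases with
    | last =>
      rw [hF2, hF1] at hab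
      exact absurd hab (Fin.castSucc_lt_last (g a)).ne
    | cast b =>
      rw [hF1, hF1] at hab
      rw [hg (Fin.castSucc_injective n hab)]

theorem bruck_belousov_prolongation_complete_mapping
    (n : ℕ) (hn : 1 ≤ n)
    (f : Fin n → Fin n → Fin n) (hf : IsQuasigroup f)
    (σ τ : Equiv.Perm (Fin n))
    (hσ : Function.Bijective (fun x => f x (σ x)))
    (hτ : Function.Bijective (fun x => f x (τ x)))
    (hdisj : ∀ x : Fin n, σ x ≠ τ x)
    (star : Fin (n + 1) → Fin (n + 1) → Fin (n + 1))
    (h1 : ∀ x y : Fin n, y ≠ σ x →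
      star x.castSucc y.castSucc = (f x y).castSucc)
    (h2 : ∀ x : Fin n, star x.castSucc (σ x).castSucc = Fin.last n)
    (h3 : ∀ x : Fin n, star x.castSucc (Fin.last n) = (f x (σ x)).castSucc)
    (h4 : ∀ x : Fin n, star (Fin.last n) (σ x).castSucc = (f x (σ x)).castSucc)
    (h5 : star (Fin.last n) (Fin.last n) = Fin.last n)
    (τ' : Fin (n + 1) → Fin (n + 1))
    (hτ'1 : ∀ x : Fin n, τ' x.castSucc = (τ x).castSucc)
    (hτ'2 : τ' (Fin.last n) = Fin.last n) :
    Function.Bijective τ' ∧ Function.Bijective (fun x => star x (τ' x)) := by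
  constructor
  · exact extend_bijective τ τ.injective τ' hτ'1 hτ'2
  · refine extend_bijective (fun x => f x (τ x)) hτ.injective _ ?_ ?_
    · intro x
      rw [hτ'1, h1 x (τ x) fun h => hdisj x h.symm]
    · rw [hτ'2, h5]
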